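/- Let γⁿ_{{a_i²}} and γⁿ_{{b_i²}} be diagonal centered Gaussian measures on ℝⁿ with variances a_i² and b_i² respectively (a_i, b_i ≥ 0). Then the 2-Wasserstein distance satisfies W₂(γⁿ_{{a_i²}}, γⁿ_{{b_i²}})² = Σ_{i=1}^n (a_i − b_i)². -/

import Mathlib

open MeasureTheory ProbabilityTheory ENNReal

/-- The `p`-Wasserstein distance between two Borel probability measures. -/
noncomputable def wassersteinDist {X : Type*} [MetricSpace X] [MeasurableSpace X]
    (p : ℝ) (μ ν : Measure X) : ℝ≥0∞ :=
  ⨅ π ∈ {π : Measure (X × X) | IsProbabilityMeasure π ∧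
      π.map Prod.fst = μ ∧ π.map Prod.snd = ν},
    (∫⁻ z, edist z.1 z.2 ^ p ∂π) ^ (1 / p)

/-- The diagonal centered Gaussian measure on `ℝⁿ` (with the Euclidean metric)
with variances `aᵢ²`. -/
noncomputable def diagGaussian (n : ℕ) (a : Fin n → ℝ) :
    Measure (EuclideanSpace ℝ (Fin n)) :=
  (Measure.pi fun i => gaussianReal 0 (a i ^ 2).toNNReal).map
    (MeasurableEquiv.toLp 2 (Fin n → ℝ))

section helpers
open Real

lemma my_integral_exp_half : ∫ x : ℝ, rexp (-(1/2) * x ^ 2) = Real.sqrt (2 * π) := by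
  rw [integral_gaussian]
  norm_num [mul_comm]

lemma my_hasDerivAt (x : ℝ) :
    HasDerivAt (fun x : ℝ => x * rexp (-(1/2) * x ^ 2))
      ((1 - x ^ 2) * rexp (-(1/2) * x ^ 2)) x := by
  have h : HasDerivAt (fun x : ℝ => rexp (-(1/2) * x ^ 2))
      (rexp (-(1/2) * x ^ 2) * (-(1/2) * (2 * x))) x := by
    have : HasDerivAt (fun x : ℝ => -(1/2) * x ^ 2) (-(1/2) * (2 * x)) x := by
      simpa using ((hasDerivAt_pow 2 x).const_mul (-(1/2:ℝ)))
    exact this.exp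
  have : HasDerivAt (fun x : ℝ => x * rexp (-(1/2) * x ^ 2))
      (1 * rexp (-(1/2) * x ^ 2) + x * (rexp (-(1/2) * x ^ 2) * (-(1/2) * (2 * x)))) x :=
    (hasDerivAt_id x).mul h
  convert this using 1
  ring

lemma my_integrable_sq_exp :
    Integrable (fun x : ℝ => x ^ 2 * rexp (-(1/2) * x ^ 2)) := by
  have := integrable_rpow_mul_exp_neg_mul_sq (by norm_num : (0:ℝ) < 1/2)
    (by norm_num : (-1:ℝ) < 2)
  simpa [Real.rpow_natCast] using this

lemma my_integral_sq_exp : ∫ x : ℝ, x ^ 2 * rexp (-(1/2) * x ^ 2) = Real.sqrt (2 * π) := by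
  have hint : Integrable (fun x : ℝ => (1 - x ^ 2) * rexp (-(1/2) * x ^ 2)) := by
    have h2 : Integrable (fun x : ℝ => rexp (-(1/2) * x ^ 2)) :=
      integrable_exp_neg_mul_sq (by norm_num)
    have := h2.sub my_integrable_sq_exp
    simpa [sub_mul, Pi.sub_def] using this
  have hf : Integrable (fun x : ℝ => x * rexp (-(1/2) * x ^ 2)) :=
    integrable_mul_exp_neg_mul_sq (by norm_num)
  have h0 := integral_eq_zero_of_hasDerivAt_of_integrable my_hasDerivAt hint hf
  have h2 : Integrable (fun x : ℝ => rexp (-(1/2) * x ^ 2)) :=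
    integrable_exp_neg_mul_sq (by norm_num)
  have hsub : ∫ x : ℝ, (1 - x ^ 2) * rexp (-(1/2) * x ^ 2)
      = (∫ x : ℝ, rexp (-(1/2) * x ^ 2)) - ∫ x : ℝ, x ^ 2 * rexp (-(1/2) * x ^ 2) := by
    rw [← integral_sub h2 my_integrable_sq_exp]
    congr 1 with x
    ring
  rw [hsub] at h0
  have := my_integral_exp_half
  linarith

lemma my_pdf_eq : gaussianPDFReal 0 1 = fun x => (Real.sqrt (2 * π))⁻¹ * rexp (-(1/2) * x ^ 2) := by
  funext x
  rw [gaussianPDFReal]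
  norm_num
  left
  ring_nf

lemma my_gr1 : gaussianReal 0 1
    = (volume : Measure ℝ).withDensity (fun x => ((gaussianPDFReal 0 1 x).toNNReal : ℝ≥0∞)) := by
  rw [gaussianReal_of_var_ne_zero 0 one_ne_zero]
  rfl

lemma my_meas_pdf : Measurable (fun x => (gaussianPDFReal 0 1 x).toNNReal) :=
  (measurable_gaussianPDFReal 0 1).real_toNNReal

lemma my_pdf_smul (g : ℝ → ℝ) :
    (fun x => (gaussianPDFReal 0 1 x).toNNReal • g x)
      = fun x => (Real.sqrt (2 * π))⁻¹ * rexp (-(1/2) * x ^ 2) * g x := by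
  funext x
  rw [NNReal.smul_def, Real.coe_toNNReal _ (gaussianPDFReal_nonneg 0 1 x), smul_eq_mul,
    my_pdf_eq]

lemma my_integrable_sq_g1 : Integrable (fun x : ℝ => x ^ 2) (gaussianReal 0 1) := by
  rw [my_gr1, integrable_withDensity_iff_integrable_smul my_meas_pdf, my_pdf_smul]
  have : Integrable (fun x : ℝ => (Real.sqrt (2*π))⁻¹ * (x ^ 2 * rexp (-(1/2) * x ^ 2))) :=
    my_integrable_sq_exp.const_mul _
  refine this.congr (Filter.Eventually.of_forall fun x => ?_)
  ring

lemma my_integral_sq_g1 : ∫ x, x ^ 2 ∂(gaussianReal 0 1) = 1 := by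
  rw [my_gr1, integral_withDensity_eq_integral_smul my_meas_pdf, my_pdf_smul]
  have : ∫ x : ℝ, (Real.sqrt (2*π))⁻¹ * rexp (-(1/2) * x ^ 2) * x ^ 2
      = (Real.sqrt (2*π))⁻¹ * ∫ x : ℝ, x ^ 2 * rexp (-(1/2) * x ^ 2) := by
    rw [← integral_const_mul]
    congr 1 with x
    ring
  rw [this, my_integral_sq_exp, inv_mul_cancel₀]
  positivity

lemma my_map_g1 {c : ℝ} (hc : 0 ≤ c) :
    (gaussianReal 0 1).map (fun x => c * x) = gaussianReal 0 ((c ^ 2).toNNReal) := by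
  have := gaussianReal_map_const_mul (μ := 0) (v := 1) c
  rw [show ((c * ·) : ℝ → ℝ) = fun x => c * x from rfl] at this
  rw [this, mul_zero]
  congr 1
  ext
  simp [Real.coe_toNNReal _ (sq_nonneg c)]

lemma my_integrable_sq_gc {c : ℝ} (hc : 0 ≤ c) :
    Integrable (fun x : ℝ => x ^ 2) (gaussianReal 0 ((c ^ 2).toNNReal)) := by
  rw [← my_map_g1 hc]
  rw [integrable_map_measure (by fun_prop) (by fun_prop)]
  have : Integrable (fun x : ℝ => c ^ 2 * x ^ 2) (gaussianReal 0 1) :=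
    my_integrable_sq_g1.const_mul _
  refine this.congr (Filter.Eventually.of_forall fun x => ?_)
  simp [Function.comp]
  ring

lemma my_integral_sq_gc {c : ℝ} (hc : 0 ≤ c) :
    ∫ x, x ^ 2 ∂(gaussianReal 0 ((c ^ 2).toNNReal)) = c ^ 2 := by
  rw [← my_map_g1 hc, integral_map (by fun_prop) (by fun_prop)]
  have : ∫ x, (c * x) ^ 2 ∂(gaussianReal 0 1) = c ^ 2 * ∫ x, x ^ 2 ∂(gaussianReal 0 1) := by
    rw [← integral_const_mul]
    congr 1 with x
    ring
  rw [this, my_integral_sq_g1, mul_one]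

lemma my_lintegral_sq_gc {c : ℝ} (hc : 0 ≤ c) :
    ∫⁻ x, ENNReal.ofReal (x ^ 2) ∂(gaussianReal 0 ((c ^ 2).toNNReal))
      = ENNReal.ofReal (c ^ 2) := by
  rw [← ofReal_integral_eq_lintegral_ofReal (my_integrable_sq_gc hc)
    (Filter.Eventually.of_forall fun x => sq_nonneg x), my_integral_sq_gc hc]

lemma my_pi_map_eval {n : ℕ} {α : Fin n → Type*} [∀ i, MeasurableSpace (α i)]
    (μ : ∀ i, Measure (α i)) [∀ i, IsProbabilityMeasure (μ i)] (i : Fin n) :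
    (Measure.pi μ).map (fun f => f i) = μ i := by
  ext s hs
  rw [Measure.map_apply (measurable_pi_apply i) hs]
  have hpre : (fun f : ∀ j, α j => f i) ⁻¹' s
      = Set.pi Set.univ (Function.update (fun j => (Set.univ : Set (α j))) i s) := by
    ext f
    simp only [Set.mem_preimage, Set.mem_pi, Set.mem_univ, true_implies]
    constructor
    · intro h j
      rcases eq_or_ne j i with rfl | hj
      · simpa using h
      · simp [Function.update_of_ne hj]
    · intro h
      simpa using h i
  rw [hpre, Measure.pi_pi, Finset.prod_eq_single i]
  · simp
  · intro j _ hj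
    simp [Function.update_of_ne hj]
  · simp

lemma my_diag_marginal (n : ℕ) (a : Fin n → ℝ) (i : Fin n) :
    (diagGaussian n a).map (fun x => x i) = gaussianReal 0 ((a i ^ 2).toNNReal) := by
  rw [diagGaussian, Measure.map_map (by exact (measurable_pi_apply (X := fun _ : Fin n => ℝ) i).comp (MeasurableEquiv.toLp 2 (Fin n → ℝ)).symm.measurable)
    (MeasurableEquiv.toLp 2 (Fin n → ℝ)).measurable]
  exact my_pi_map_eval _ i

lemma my_costEq {n : ℕ} (z : EuclideanSpace ℝ (Fin n) × EuclideanSpace ℝ (Fin n)) :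
    edist z.1 z.2 ^ (2 : ℝ) = ∑ i, ENNReal.ofReal ((z.1 i - z.2 i) ^ 2) := by
  rw [EuclideanSpace.edist_eq, ← ENNReal.rpow_mul,
    show (1/2:ℝ) * 2 = 1 by norm_num, ENNReal.rpow_one]
  congr 1 with i
  rw [edist_dist, ← ENNReal.ofReal_pow dist_nonneg, Real.dist_eq, sq_abs]

lemma my_ae_zero {α : Type*} [MeasurableSpace α] {μ : Measure α} {f : α → ℝ}
    (hf : Measurable f) (h : μ.map f = Measure.dirac 0) : f =ᵐ[μ] 0 := by
  have hs : MeasurableSet {x : ℝ | x ≠ 0} := (measurableSet_singleton 0).compl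
  have : μ (f ⁻¹' {x : ℝ | x ≠ 0}) = 0 := by
    rw [← Measure.map_apply hf hs, h, Measure.dirac_apply' _ hs]
    simp
  rw [Filter.EventuallyEq, ae_iff]
  simpa [Set.preimage] using this

lemma my_coord_lb {a b : ℝ} (ha : 0 ≤ a) (hb : 0 ≤ b) (P : Measure (ℝ × ℝ))
    [IsProbabilityMeasure P]
    (h1 : P.map Prod.fst = gaussianReal 0 ((a ^ 2).toNNReal))
    (h2 : P.map Prod.snd = gaussianReal 0 ((b ^ 2).toNNReal)) :
    ENNReal.ofReal ((a - b) ^ 2) ≤ ∫⁻ z, ENNReal.ofReal ((z.1 - z.2) ^ 2) ∂P := by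
  have hX : Integrable (fun z : ℝ × ℝ => z.1 ^ 2) P := by
    have := (integrable_map_measure (f := Prod.fst) (g := fun x : ℝ => x ^ 2)
      (by fun_prop) measurable_fst.aemeasurable).mp (by rw [h1]; exact my_integrable_sq_gc ha)
    exact this
  have hY : Integrable (fun z : ℝ × ℝ => z.2 ^ 2) P := by
    have := (integrable_map_measure (f := Prod.snd) (g := fun x : ℝ => x ^ 2)
      (by fun_prop) measurable_snd.aemeasurable).mp (by rw [h2]; exact my_integrable_sq_gc hb)
    exact this
  have hIX : ∫ z, z.1 ^ 2 ∂P = a ^ 2 := by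
    have : ∫ z, z.1 ^ 2 ∂P = ∫ x, x ^ 2 ∂(P.map Prod.fst) :=
      (integral_map measurable_fst.aemeasurable ((measurable_id.pow_const 2).aestronglyMeasurable)).symm
    rw [this, h1, my_integral_sq_gc ha]
  have hIY : ∫ z, z.2 ^ 2 ∂P = b ^ 2 := by
    have : ∫ z, z.2 ^ 2 ∂P = ∫ x, x ^ 2 ∂(P.map Prod.snd) :=
      (integral_map measurable_snd.aemeasurable ((measurable_id.pow_const 2).aestronglyMeasurable)).symm
    rw [this, h2, my_integral_sq_gc hb]
  by_cases hg : Integrable (fun z : ℝ × ℝ => (z.1 - z.2) ^ 2) P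
  swap
  · have htop : ∫⁻ z, ENNReal.ofReal ((z.1 - z.2) ^ 2) ∂P = ⊤ := by
      by_contra h
      refine hg ⟨(by fun_prop : Measurable fun z : ℝ × ℝ => (z.1-z.2)^2).aestronglyMeasurable, ?_⟩
      rw [HasFiniteIntegral]
      have : ∀ z : ℝ × ℝ, ‖(z.1 - z.2) ^ 2‖ₑ = ENNReal.ofReal ((z.1 - z.2) ^ 2) :=
        fun z => (Real.enorm_eq_ofReal (sq_nonneg _))
      simp_rw [this]
      exact lt_top_iff_ne_top.mpr h
    rw [htop]
    exact le_top
  -- integrable case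
  have hXY : Integrable (fun z : ℝ × ℝ => z.1 * z.2) P := by
    have h' : (fun z : ℝ × ℝ => z.1 * z.2)
        = fun z => (z.1 ^ 2 + z.2 ^ 2 - (z.1 - z.2) ^ 2) / 2 := by
      funext z; ring
    rw [h']
    exact ((hX.add hY).sub hg).div_const 2
  have hEXY : ∫ z, z.1 * z.2 ∂P ≤ a * b := by
    rcases eq_or_lt_of_le ha with rfl | ha'
    · have hz : (fun z : ℝ × ℝ => z.1) =ᵐ[P] 0 := by
        refine my_ae_zero measurable_fst ?_
        rw [h1]; norm_num [gaussianReal_zero_var]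
      have hz' : (fun z : ℝ × ℝ => z.1 * z.2) =ᵐ[P] 0 := by
        filter_upwards [hz] with z h
        simp only [Pi.zero_apply] at h ⊢
        rw [h, zero_mul]
      rw [integral_congr_ae hz']
      simp
    rcases eq_or_lt_of_le hb with rfl | hb'
    · have hz : (fun z : ℝ × ℝ => z.2) =ᵐ[P] 0 := by
        refine my_ae_zero measurable_snd ?_
        rw [h2]; norm_num [gaussianReal_zero_var]
      have hz' : (fun z : ℝ × ℝ => z.1 * z.2) =ᵐ[P] 0 := by
        filter_upwards [hz] with z h
        simp only [Pi.zero_apply] at h ⊢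
        rw [h, mul_zero]
      rw [integral_congr_ae hz']
      simp
    · -- a, b > 0
      have hmono : ∫ z, z.1 * z.2 ∂P
          ≤ ∫ z, (b/(2*a)) * z.1 ^ 2 + (a/(2*b)) * z.2 ^ 2 ∂P := by
        refine integral_mono hXY ((hX.const_mul _).add (hY.const_mul _)) fun z => ?_
        have key : b/(2*a) * z.1 ^ 2 + a/(2*b) * z.2 ^ 2 - z.1 * z.2
            = (b * z.1 - a * z.2) ^ 2 / (2 * (a * b)) := by
          field_simp
          ring
        have hnn : (0:ℝ) ≤ (b * z.1 - a * z.2) ^ 2 / (2 * (a * b)) :=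
          div_nonneg (sq_nonneg _) (by positivity)
        linarith
      rw [integral_add (hX.const_mul _) (hY.const_mul _), integral_const_mul,
        integral_const_mul, hIX, hIY] at hmono
      calc ∫ z, z.1 * z.2 ∂P ≤ b/(2*a) * a^2 + a/(2*b) * b^2 := hmono
        _ = a * b := by field_simp; ring
  have hI : (a - b) ^ 2 ≤ ∫ z, (z.1 - z.2) ^ 2 ∂P := by
    have hexp : ∫ z, (z.1 - z.2) ^ 2 ∂P
        = a ^ 2 + b ^ 2 - 2 * ∫ z, z.1 * z.2 ∂P := by
      have h' : (fun z : ℝ × ℝ => (z.1 - z.2) ^ 2)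
          = fun z => z.1 ^ 2 + z.2 ^ 2 - 2 * (z.1 * z.2) := by
        funext z; ring
      have hsum : Integrable (fun z : ℝ × ℝ => z.1 ^ 2 + z.2 ^ 2) P := hX.add hY
      rw [h', integral_sub hsum (hXY.const_mul 2), integral_add hX hY,
        integral_const_mul, hIX, hIY]
    rw [hexp]
    nlinarith [hEXY]
  rw [← ofReal_integral_eq_lintegral_ofReal hg
    (Filter.Eventually.of_forall fun z => sq_nonneg _)]
  exact ENNReal.ofReal_le_ofReal hI

lemma my_lintegral_sq_g1 : ∫⁻ x, ENNReal.ofReal (x ^ 2) ∂(gaussianReal 0 1) = 1 := by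
  have := my_lintegral_sq_gc (c := 1) zero_le_one
  simpa using this

section main
variable {n : ℕ}

local notation "E" => EuclideanSpace ℝ (Fin n)

lemma my_hm (i : Fin n) : Measurable (fun x : E => x i) :=
  (measurable_pi_apply i).comp (MeasurableEquiv.toLp 2 (Fin n → ℝ)).symm.measurable

lemma my_lower (a b : Fin n → ℝ) (ha : ∀ i, 0 ≤ a i) (hb : ∀ i, 0 ≤ b i)
    (P : Measure (E × E)) (hprob : IsProbabilityMeasure P)
    (hfst : P.map Prod.fst = diagGaussian n a) (hsnd : P.map Prod.snd = diagGaussian n b) :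
    ENNReal.ofReal (∑ i, (a i - b i) ^ 2) ≤ ∫⁻ z, edist z.1 z.2 ^ (2 : ℝ) ∂P := by
  have hmeas : ∀ i : Fin n, Measurable fun z : E × E => ENNReal.ofReal ((z.1 i - z.2 i) ^ 2) :=
    fun i => ((((my_hm i).comp measurable_fst).sub
      ((my_hm i).comp measurable_snd)).pow_const 2).ennreal_ofReal
  have hcosteq : ∫⁻ z, edist z.1 z.2 ^ (2 : ℝ) ∂P
      = ∑ i, ∫⁻ z, ENNReal.ofReal ((z.1 i - z.2 i) ^ 2) ∂P := by
    rw [lintegral_congr my_costEq]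
    exact lintegral_finset_sum _ fun i _ => hmeas i
  rw [hcosteq, ENNReal.ofReal_sum_of_nonneg (fun i _ => sq_nonneg _)]
  refine Finset.sum_le_sum fun i _ => ?_
  have hmi : Measurable fun z : E × E => (z.1 i, z.2 i) :=
    ((my_hm i).comp measurable_fst).prodMk ((my_hm i).comp measurable_snd)
  haveI : IsProbabilityMeasure (P.map fun z : E × E => (z.1 i, z.2 i)) :=
    Measure.isProbabilityMeasure_map hmi.aemeasurable
  have h1 : (P.map fun z : E × E => (z.1 i, z.2 i)).map Prod.fst
      = gaussianReal 0 ((a i ^ 2).toNNReal) := by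
    rw [Measure.map_map measurable_fst hmi]
    have : (Prod.fst ∘ fun z : E × E => (z.1 i, z.2 i)) = (fun x : E => x i) ∘ Prod.fst := rfl
    rw [this, ← Measure.map_map (my_hm i) measurable_fst, hfst, my_diag_marginal]
  have h2 : (P.map fun z : E × E => (z.1 i, z.2 i)).map Prod.snd
      = gaussianReal 0 ((b i ^ 2).toNNReal) := by
    rw [Measure.map_map measurable_snd hmi]
    have : (Prod.snd ∘ fun z : E × E => (z.1 i, z.2 i)) = (fun x : E => x i) ∘ Prod.snd := rfl
    rw [this, ← Measure.map_map (my_hm i) measurable_snd, hsnd, my_diag_marginal]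
  have hkey := my_coord_lb (ha i) (hb i) _ h1 h2
  rwa [lintegral_map (f := fun z : ℝ × ℝ => ENNReal.ofReal ((z.1 - z.2) ^ 2)) (((measurable_fst.sub measurable_snd).pow_const 2).ennreal_ofReal) hmi]
    at hkey

lemma my_upper (a b : Fin n → ℝ) (ha : ∀ i, 0 ≤ a i) (hb : ∀ i, 0 ≤ b i) :
    ∃ P : Measure (E × E), (IsProbabilityMeasure P ∧
      P.map Prod.fst = diagGaussian n a ∧ P.map Prod.snd = diagGaussian n b) ∧
      ∫⁻ z, edist z.1 z.2 ^ (2 : ℝ) ∂P = ENNReal.ofReal (∑ i, (a i - b i) ^ 2) := by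
  set e := (MeasurableEquiv.toLp 2 (Fin n → ℝ)).symm
  set ρ : Measure (Fin n → ℝ) := Measure.pi fun _ => gaussianReal 0 1 with hρ
  have hFa : Measurable fun x : Fin n → ℝ => (fun i => a i * x i) :=
    measurable_pi_lambda _ fun i => (measurable_pi_apply (X := fun _ : Fin n => ℝ) i).const_mul (a i)
  have hFb : Measurable fun x : Fin n → ℝ => (fun i => b i * x i) :=
    measurable_pi_lambda _ fun i => (measurable_pi_apply (X := fun _ : Fin n => ℝ) i).const_mul (b i)
  set F : (Fin n → ℝ) → E × E :=
    fun x => (e.symm (fun i => a i * x i), e.symm (fun i => b i * x i)) with hFdef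
  have hF : Measurable F := (e.symm.measurable.comp hFa).prodMk (e.symm.measurable.comp hFb)
  refine ⟨ρ.map F, ⟨Measure.isProbabilityMeasure_map hF.aemeasurable, ?_, ?_⟩, ?_⟩
  · rw [Measure.map_map measurable_fst hF]
    have : (Prod.fst ∘ F) = ⇑e.symm ∘ (fun x i => a i * x i) := rfl
    rw [this, ← Measure.map_map e.symm.measurable hFa,
      (measurePreserving_pi _ _ fun i =>
        ⟨measurable_const_mul _, my_map_g1 (ha i)⟩).map_eq]
    rfl
  · rw [Measure.map_map measurable_snd hF]
    have : (Prod.snd ∘ F) = ⇑e.symm ∘ (fun x i => b i * x i) := rfl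
    rw [this, ← Measure.map_map e.symm.measurable hFb,
      (measurePreserving_pi _ _ fun i =>
        ⟨measurable_const_mul _, my_map_g1 (hb i)⟩).map_eq]
    rfl
  · have hmeas : Measurable fun z : E × E => ∑ i, ENNReal.ofReal ((z.1 i - z.2 i) ^ 2) :=
      Finset.measurable_sum _ fun i _ => ((((my_hm i).comp measurable_fst).sub
        ((my_hm i).comp measurable_snd)).pow_const 2).ennreal_ofReal
    rw [lintegral_congr my_costEq, lintegral_map hmeas hF]
    have hcoord : ∀ x : Fin n → ℝ, ∀ i : Fin n,
        ((F x).1 i - (F x).2 i) = (a i - b i) * x i := by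
      intro x i
      show a i * x i - b i * x i = _
      ring
    have hpt : ∀ x : Fin n → ℝ,
        ∑ i, ENNReal.ofReal (((F x).1 i - (F x).2 i) ^ 2)
          = ∑ i, ENNReal.ofReal ((a i - b i) ^ 2) * ENNReal.ofReal ((x i) ^ 2) := by
      intro x
      refine Finset.sum_congr rfl fun i _ => ?_
      rw [hcoord x i, mul_pow, ENNReal.ofReal_mul (sq_nonneg _)]
    rw [lintegral_congr hpt, lintegral_finset_sum _ fun i _ =>
      (((measurable_pi_apply i).pow_const 2).ennreal_ofReal).const_mul _]
    have heach : ∀ i : Fin n, ∫⁻ x, ENNReal.ofReal ((x i) ^ 2) ∂ρ = 1 := by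
      intro i
      have hmap : ρ.map (fun f => f i) = gaussianReal 0 1 := my_pi_map_eval _ i
      have := lintegral_map (μ := ρ) (f := fun t : ℝ => ENNReal.ofReal (t ^ 2))
        (g := fun f : Fin n → ℝ => f i)
        ((measurable_id.pow_const 2).ennreal_ofReal) (measurable_pi_apply i)
      rw [hmap, my_lintegral_sq_g1] at this
      exact this.symm
    have hconst : ∀ i : Fin n, ∫⁻ x, ENNReal.ofReal ((a i - b i) ^ 2)
        * ENNReal.ofReal ((x i) ^ 2) ∂ρ = ENNReal.ofReal ((a i - b i) ^ 2) := by
      intro i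
      rw [lintegral_const_mul _ ((measurable_pi_apply i).pow_const 2).ennreal_ofReal,
        heach i, mul_one]
    rw [ENNReal.ofReal_sum_of_nonneg (fun i _ => sq_nonneg _)]
    exact Finset.sum_congr rfl fun i _ => hconst i

end main


end helpers

/-- Gelbrich's formula for diagonal centered Gaussians:
`W₂(γ_{a²}, γ_{b²})² = ∑ (aᵢ − bᵢ)²`. -/
theorem wasserstein_diagGaussian (n : ℕ) (a b : Fin n → ℝ)
    (ha : ∀ i, 0 ≤ a i) (hb : ∀ i, 0 ≤ b i) :
    wassersteinDist 2 (diagGaussian n a) (diagGaussian n b) ^ (2 : ℕ)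
      = ENNReal.ofReal (∑ i, (a i - b i) ^ 2) := by
  obtain ⟨P0, hP0mem, hP0cost⟩ := my_upper a b ha hb
  have hW : wassersteinDist 2 (diagGaussian n a) (diagGaussian n b)
      = (ENNReal.ofReal (∑ i, (a i - b i) ^ 2)) ^ (1/2 : ℝ) := by
    rw [wassersteinDist]
    apply le_antisymm
    · refine iInf₂_le_of_le P0 hP0mem ?_
      rw [hP0cost]
    · refine le_iInf₂ fun P hP => ?_
      obtain ⟨h1, h2, h3⟩ := hP
      exact ENNReal.rpow_le_rpow (my_lower a b ha hb P h1 h2 h3) (by norm_num)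
  rw [hW, ← ENNReal.rpow_natCast _ 2, ← ENNReal.rpow_mul]
  norm_num
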